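/- Let X₁ and X₀ be groups, d : X₁ → X₀ and e : X₀ → X₁ group homomorphisms with d ∘ e = id, and P₁ ⊆ X₁, P₀ ⊆ X₀ submonoids with d(P₁) ⊆ P₀ and e(P₀) ⊆ P₁. Suppose the Schreier condition holds: for every a ∈ P₁, a · e(d(a))⁻¹ ∈ P₁. Then the map a ↦ (a · e(d(a))⁻¹, d(a)) is a bijection from P₁ onto ((ker d) ∩ P₁) × P₀, with inverse (k,x) ↦ k · e(x). In particular every a ∈ P₁ factors uniquely as a = k · e(x) with k ∈ (ker d) ∩ P₁ and x ∈ P₀. -/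
import Mathlib


/-- for a Schreier point of right-preordered groups, the map
`a ↦ (a * (e (d a))⁻¹, d a)` is a bijection from `P₁` onto `((ker d) ∩ P₁) × P₀`, with
inverse `(k, x) ↦ k * e x`; every positive element factors uniquely as `k * e x`. -/
theorem schreier_cone_decomposition {X₁ X₀ : Type*} [Group X₁] [Group X₀]
    (d : X₁ →* X₀) (e : X₀ →* X₁) (hde : ∀ x, d (e x) = x)
    (P₁ : Submonoid X₁) (P₀ : Submonoid X₀)
    (hd : ∀ a ∈ P₁, d a ∈ P₀) (he : ∀ x ∈ P₀, e x ∈ P₁)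
    (schreier : ∀ a ∈ P₁, a * (e (d a))⁻¹ ∈ P₁) :
    Set.BijOn (fun a : X₁ => (a * (e (d a))⁻¹, d a)) (P₁ : Set X₁)
      ((((d.ker : Set X₁) ∩ (P₁ : Set X₁)) ×ˢ (P₀ : Set X₀))) ∧
    (∀ a ∈ P₁, (a * (e (d a))⁻¹) * e (d a) = a) ∧
    (∀ k x, k ∈ d.ker → k ∈ P₁ → x ∈ P₀ →
      (k * e x) * (e (d (k * e x)))⁻¹ = k ∧ d (k * e x) = x) ∧
    (∀ a ∈ P₁, ∃! q : X₁ × X₀,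
      (q.1 ∈ d.ker ∧ q.1 ∈ P₁ ∧ q.2 ∈ P₀) ∧ a = q.1 * e q.2) := by
  have hker : ∀ a : X₁, a * (e (d a))⁻¹ ∈ d.ker := by
    intro a
    simp [MonoidHom.mem_ker, hde]
  have hdk : ∀ k x, k ∈ d.ker → d (k * e x) = x := by
    intro k x hk
    rw [map_mul, hde, MonoidHom.mem_ker.mp hk, one_mul]
  have hinv : ∀ k x, k ∈ d.ker → (k * e x) * (e (d (k * e x)))⁻¹ = k := by
    intro k x hk
    rw [hdk k x hk, mul_inv_cancel_right]
  refine ⟨⟨?_, ?_, ?_⟩, ?_, ?_, ?_⟩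
  · intro a ha
    exact ⟨⟨hker a, schreier a ha⟩, hd a ha⟩
  · intro a ha b hb h
    have h1 : a * (e (d a))⁻¹ = b * (e (d b))⁻¹ := congrArg Prod.fst h
    have h2 : d a = d b := congrArg Prod.snd h
    have := h1
    rw [h2] at this
    calc a = a * (e (d b))⁻¹ * e (d b) := by group
      _ = b * (e (d b))⁻¹ * e (d b) := by rw [this]
      _ = b := by group
  · rintro ⟨k, x⟩ ⟨⟨hk, hkP⟩, hx⟩
    refine ⟨k * e x, P₁.mul_mem hkP (he x hx), ?_⟩
    simp only
    rw [hinv k x hk, hdk k x hk]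
  · intro a _
    rw [inv_mul_cancel_right]
  · intro k x hk _ hx
    exact ⟨hinv k x hk, hdk k x hk⟩
  · intro a ha
    refine ⟨(a * (e (d a))⁻¹, d a), ⟨⟨hker a, schreier a ha, hd a ha⟩, by simp⟩, ?_⟩
    rintro ⟨k, x⟩ ⟨⟨hk, hkP, hx⟩, rfl⟩
    simp only [Prod.mk.injEq]
    exact ⟨(hinv k x hk).symm, (hdk k x hk).symm⟩
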